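/- Let (x_k) satisfy the n-th order equal-roots difference equation with ρ ∈ (0,1). For k ≥ n define α_{k,n} = Σ_{i=0}^{n-1} |P_i(k)| ρ^{k-i}. Then for all initial conditions with ‖x^{(0)}‖_∞ ≤ 1 and all k ≥ n, x_k ≤ α_{k,n}, and equality for each k is attained with initial conditions x_i = (-1)^{n-1-i}, i = 0,…,n-1. -/

import Mathlib

open Polynomial Finset

lemma findiff : ∀ (n : ℕ) (P : ℝ[X]), P.degree < n → ∀ x : ℝ,
    ∑ j ∈ Finset.range (n+1), (-1:ℝ)^j * (n.choose j) * P.eval (x - j) = 0 := by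
  intro n
  induction n with
  | zero => intro P hP x; simp at hP; simp [hP]
  | succ n ih =>
    intro P hP x
    by_cases h0 : P = 0
    · simp [h0]
    set Q : ℝ[X] := P - P.comp (X - C 1) with hQ
    have hdc : (P.comp (X - C 1)).natDegree = P.natDegree := by
      rw [natDegree_comp, natDegree_X_sub_C, mul_one]
    have hlc : (P.comp (X - C 1)).leadingCoeff = P.leadingCoeff := by
      rcases Nat.eq_zero_or_pos P.natDegree with h | h
      · have := Polynomial.eq_C_of_natDegree_eq_zero h
        rw [this]; simp
      · rw [Polynomial.leadingCoeff_comp (by rw [natDegree_X_sub_C]; norm_num)]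
        rw [leadingCoeff_X_sub_C, one_pow, mul_one]
    have hQdeg : Q.degree < n := by
      have hne : P.comp (X - C 1) ≠ 0 := by
        intro h; apply h0
        have := hlc; rw [h] at this; simp at this
        exact leadingCoeff_eq_zero.mp this.symm
      have h1 : Q.degree < P.degree := by
        apply Polynomial.degree_sub_lt
        · rw [degree_eq_natDegree h0, degree_eq_natDegree hne, hdc]
        · exact h0
        · exact hlc.symm
      calc Q.degree < P.degree := h1
        _ ≤ n := by
          have h2 : P.natDegree < n + 1 := (natDegree_lt_iff_degree_lt h0).mpr hP
          exact Polynomial.degree_le_natDegree.trans (by exact_mod_cast Nat.lt_succ_iff.mp h2)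
    have key := ih Q hQdeg x
    have hQe : ∀ y : ℝ, Q.eval y = P.eval y - P.eval (y - 1) := by
      intro y; simp [hQ, eval_comp]
    have hrw : ∀ j ∈ Finset.range (n+1),
        (-1:ℝ)^(j+1) * (((n+1).choose (j+1) : ℕ):ℝ) * P.eval (x - ((j+1:ℕ):ℝ))
        = (-1:ℝ)^j * ((n.choose j : ℕ):ℝ) * Q.eval (x - j)
          + ((-1:ℝ)^(j+1) * ((n.choose (j+1) : ℕ):ℝ) * P.eval (x - ((j+1:ℕ):ℝ))
             - (-1:ℝ)^j * ((n.choose j : ℕ):ℝ) * P.eval (x - (j:ℝ))) := by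
      intro j _
      have harg : x - ((j+1:ℕ):ℝ) = x - (j:ℝ) - 1 := by push_cast; ring
      rw [harg, hQe, Nat.choose_succ_succ]
      push_cast; ring
    rw [Finset.sum_range_succ', Finset.sum_congr rfl hrw, Finset.sum_add_distrib,
        Finset.sum_range_sub (fun j => (-1:ℝ)^j * ((n.choose j : ℕ):ℝ) * P.eval (x - (j:ℝ))), key]
    simp [Nat.choose_succ_self]

lemma sol (n : ℕ) (hn : 1 ≤ n) (ρ : ℝ) (hρ0 : 0 < ρ) (x : ℕ → ℝ)
    (hx : ∀ k : ℕ,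
      ∑ j ∈ Finset.range (n + 1), (-1 : ℝ) ^ j * (n.choose j) * ρ ^ j * x (k + n - j) = 0) :
    ∀ k : ℕ, x k = ρ^k *
      (Lagrange.interpolate (Finset.range n) (fun i : ℕ => (i:ℝ)) (fun i => x i / ρ^i)).eval
        (k:ℝ) := by
  have hinj : Set.InjOn (fun i : ℕ => (i:ℝ)) (Finset.range n) :=
    fun a _ b _ h => Nat.cast_injective h
  set R := Lagrange.interpolate (Finset.range n) (fun i : ℕ => (i:ℝ)) (fun i => x i / ρ^i) with hR
  have hdeg : R.degree < n := by
    have := Lagrange.degree_interpolate_lt (fun i => x i / ρ^i) hinj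
    rw [Finset.card_range] at this; exact this
  intro k
  induction k using Nat.strong_induction_on with
  | _ k IH =>
    by_cases hk : k < n
    · have h1 := Lagrange.eval_interpolate_at_node (fun i => x i / ρ^i) hinj
        (Finset.mem_range.mpr hk)
      rw [← hR] at h1
      rw [h1]
      field_simp
    · push_neg at hk
      have hy : ∀ j, 1 ≤ j → j ≤ n → x (k - j) = ρ^(k-j) * R.eval ((k - j : ℕ):ℝ) := by
        intro j h1 h2
        exact IH (k - j) (by omega)
      have h2 : ∑ j ∈ Finset.range (n+1), (-1:ℝ)^j * (n.choose j) * ρ^j * x (k - j) = 0 := by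
        have h := hx (k - n)
        have e : ∀ j ∈ Finset.range (n+1),
            (-1:ℝ)^j * (n.choose j) * ρ^j * x (k - n + n - j)
            = (-1:ℝ)^j * (n.choose j) * ρ^j * x (k - j) := by
          intro j hj
          rw [show k - n + n - j = k - j by omega]
        rw [Finset.sum_congr rfl e] at h
        exact h
      have h3 := findiff n R hdeg (k:ℝ)
      have h4 : ∑ j ∈ Finset.range (n+1),
          (-1:ℝ)^j * (n.choose j) * ρ^j * (ρ^(k-j) * R.eval ((k - j : ℕ):ℝ)) = 0 := by
        have e : ∀ j ∈ Finset.range (n+1),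
            (-1:ℝ)^j * (n.choose j) * ρ^j * (ρ^(k-j) * R.eval ((k - j : ℕ):ℝ))
            = ρ^k * ((-1:ℝ)^j * (n.choose j) * R.eval ((k:ℝ) - j)) := by
          intro j hj
          have hjk : j ≤ k := le_trans (by simpa [Nat.lt_succ_iff] using hj) hk
          have hc : ((k - j : ℕ):ℝ) = (k:ℝ) - j := by
            push_cast [hjk]; ring
          rw [hc, show ρ^k = ρ^j * ρ^(k-j) by rw [← pow_add]; congr 1; omega]
          ring
        rw [Finset.sum_congr rfl e, ← Finset.mul_sum, h3, mul_zero]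
      have h5 : ∑ j ∈ Finset.range (n+1),
          (-1:ℝ)^j * (n.choose j) * ρ^j * (x (k - j) - ρ^(k-j) * R.eval ((k - j : ℕ):ℝ)) = 0 := by
        simp only [mul_sub]
        rw [Finset.sum_sub_distrib, h2, h4, sub_zero]
      rw [Finset.sum_range_succ'] at h5
      have hzero : ∀ j ∈ Finset.range n,
          (-1:ℝ)^(j+1) * (n.choose (j+1)) * ρ^(j+1) *
            (x (k - (j+1)) - ρ^(k-(j+1)) * R.eval ((k - (j+1) : ℕ):ℝ)) = 0 := by
        intro j hj
        rw [hy (j+1) (by omega) (by simpa [Nat.lt_succ_iff, Nat.succ_le_iff] using Finset.mem_range.mp hj)]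
        simp
      rw [Finset.sum_congr rfl hzero, Finset.sum_const_zero, zero_add] at h5
      simp only [pow_zero, Nat.choose_zero_right, Nat.cast_one, one_mul, Nat.sub_zero] at h5
      linarith

/-- Lagrange basis polynomial at nodes 0,1,…,n-1, evaluated at a natural number k. -/
noncomputable def lagrangeP (n i : ℕ) (k : ℕ) : ℝ :=
  ∏ j ∈ (Finset.range n).erase i, ((k : ℝ) - (j : ℝ)) / ((i : ℝ) - (j : ℝ))

lemma basis_eval (n i k : ℕ) :
    (Lagrange.basis (Finset.range n) (fun j : ℕ => (j:ℝ)) i).eval (k:ℝ) = lagrangeP n i k := by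
  unfold lagrangeP
  rw [Lagrange.basis, Polynomial.eval_prod]
  apply Finset.prod_congr rfl
  intro j hj
  simp [Lagrange.basisDivisor, div_eq_mul_inv, mul_comm]

lemma sign_lemma (n i k : ℕ) (hi : i < n) (hk : n ≤ k) :
    |lagrangeP n i k| = (-1:ℝ)^(n-1-i) * lagrangeP n i k := by
  unfold lagrangeP
  rw [Finset.abs_prod]
  have hcount : ((Finset.range n).erase i).filter (fun j => i < j) = Finset.Ioo i n := by
    ext j
    simp only [Finset.mem_filter, Finset.mem_erase, Finset.mem_range, Finset.mem_Ioo]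
    omega
  have hsign : ((-1:ℝ)^(n-1-i))
      = ∏ j ∈ (Finset.range n).erase i, (if i < j then (-1:ℝ) else 1) := by
    rw [Finset.prod_ite, Finset.prod_const, Finset.prod_const, one_pow, mul_one, hcount,
      Nat.card_Ioo]
    congr 1
    omega
  rw [hsign, ← Finset.prod_mul_distrib]
  apply Finset.prod_congr rfl
  intro j hj
  obtain ⟨hji, hjn⟩ := Finset.mem_erase.mp hj
  have hjn' := Finset.mem_range.mp hjn
  have h1 : (0:ℝ) < (k:ℝ) - j := by
    have : (j:ℝ) < k := by exact_mod_cast lt_of_lt_of_le hjn' hk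
    linarith
  split_ifs with h
  · have h2 : (i:ℝ) - j < 0 := by
      have : (i:ℝ) < j := by exact_mod_cast h
      linarith
    rw [abs_div, abs_of_pos h1, abs_of_neg h2, div_neg]
    ring
  · have h2 : (0:ℝ) < (i:ℝ) - j := by
      have : (j:ℝ) < i := by exact_mod_cast (by omega : j < i)
      linarith
    rw [abs_div, abs_of_pos h1, abs_of_pos h2, one_mul]

/-- Upper bound α_{k,n} on solutions of the equal-roots equation over the unit box
    of initial conditions, attained with x_i = (-1)^{n-1-i}. -/
theorem stmt7 (n : ℕ) (hn : 1 ≤ n) (ρ : ℝ) (hρ0 : 0 < ρ) (hρ1 : ρ < 1) :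
    (∀ x : ℕ → ℝ,
      (∀ k : ℕ,
        ∑ j ∈ Finset.range (n + 1), (-1 : ℝ) ^ j * (n.choose j) * ρ ^ j * x (k + n - j) = 0) →
      (∀ i : ℕ, i < n → |x i| ≤ 1) →
      ∀ k : ℕ, n ≤ k → x k ≤ ∑ i ∈ Finset.range n, |lagrangeP n i k| * ρ ^ (k - i)) ∧
    (∀ x : ℕ → ℝ,
      (∀ k : ℕ,
        ∑ j ∈ Finset.range (n + 1), (-1 : ℝ) ^ j * (n.choose j) * ρ ^ j * x (k + n - j) = 0) →
      (∀ i : ℕ, i < n → x i = (-1 : ℝ) ^ (n - 1 - i)) →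
      ∀ k : ℕ, n ≤ k → x k = ∑ i ∈ Finset.range n, |lagrangeP n i k| * ρ ^ (k - i)) := by
  have key : ∀ x : ℕ → ℝ,
      (∀ k : ℕ,
        ∑ j ∈ Finset.range (n + 1), (-1 : ℝ) ^ j * (n.choose j) * ρ ^ j * x (k + n - j) = 0) →
      ∀ k : ℕ, n ≤ k →
        x k = ∑ i ∈ Finset.range n, x i * lagrangeP n i k * ρ ^ (k - i) := by
    intro x hrec k hk
    have hsol := sol n hn ρ hρ0 x hrec k
    rw [hsol, Lagrange.interpolate_apply, Polynomial.eval_finset_sum, Finset.mul_sum]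
    apply Finset.sum_congr rfl
    intro i hi
    have hin := Finset.mem_range.mp hi
    rw [Polynomial.eval_mul, Polynomial.eval_C, basis_eval]
    rw [show ρ^k = ρ^i * ρ^(k-i) by rw [← pow_add]; congr 1; omega]
    have : ρ^i ≠ 0 := pow_ne_zero _ (ne_of_gt hρ0)
    field_simp
  constructor
  · intro x hrec hinit k hk
    rw [key x hrec k hk]
    apply Finset.sum_le_sum
    intro i hi
    have hin := Finset.mem_range.mp hi
    have hρk : (0:ℝ) ≤ ρ^(k-i) := le_of_lt (pow_pos hρ0 _)
    calc x i * lagrangeP n i k * ρ^(k-i)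
        ≤ |x i * lagrangeP n i k| * ρ^(k-i) :=
          mul_le_mul_of_nonneg_right (le_abs_self _) hρk
      _ = |x i| * |lagrangeP n i k| * ρ^(k-i) := by rw [abs_mul]
      _ ≤ 1 * |lagrangeP n i k| * ρ^(k-i) := by
          apply mul_le_mul_of_nonneg_right _ hρk
          exact mul_le_mul_of_nonneg_right (hinit i hin) (abs_nonneg _)
      _ = |lagrangeP n i k| * ρ^(k-i) := by rw [one_mul]
  · intro x hrec hinit k hk
    rw [key x hrec k hk]
    apply Finset.sum_congr rfl
    intro i hi
    have hin := Finset.mem_range.mp hi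
    rw [hinit i hin, ← sign_lemma n i k hin hk]
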